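/- arXiv:2308.05668 — 2 statements merged into one kernel-verified Lean document; each statement's English description precedes it below -/
import Mathlib

section
/- Let $(\Omega,\mathcal{F},\{\mathcal{F}_t\},\mathbb{P})$ be a filtered probability space and $Y=\{Y_t\}_{t\ge 0}$ an adapted integrable process. A stopping time $\tau$ maximizes $\mathbb{E}[Y_\tau]$ over all stopping times if and only if: (i) for all stopping times $\tau' \le \tau$, $\mathbb{E}[Y_\tau \mid \mathcal{F}_{\tau'}] \ge \mathbb{E}[Y_{\tau'} \mid \mathcal{F}_{\tau'}]$ a.s., and (ii) for all stopping times $\tau' \ge \tau$, $\mathbb{E}[Y_\tau \mid \mathcal{F}_\tau] \ge \mathbb{E}[Y_{\tau'} \mid \mathcal{F}_\tau]$ a.s. -/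
open MeasureTheory Filter Set

section Aux

variable {Ω : Type*} {m : MeasurableSpace Ω} {ℱ : Filtration ℝ m} {π η : Ω → ℝ}

/-- If `π ≤ η` are stopping times and `A` is `ℱ_π`-measurable, then the map equal to `π` on `A`
and `η` off `A` is a stopping time. -/
lemma aux_piecewise_fst (hπ : IsStoppingTime ℱ (fun ω => (π ω : WithTop ℝ))) (hη : IsStoppingTime ℱ (fun ω => (η ω : WithTop ℝ)))
    (hle : ∀ ω, π ω ≤ η ω) {A : Set Ω} [DecidablePred (· ∈ A)]
    (hA : MeasurableSet[hπ.measurableSpace] A) :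
    IsStoppingTime ℱ (fun ω => (A.piecewise π η ω : WithTop ℝ)) := by
  intro t
  have h1 : {ω | (A.piecewise π η ω : WithTop ℝ) ≤ t} =
      (A ∩ {ω | (π ω : WithTop ℝ) ≤ t}) ∪ ((Aᶜ ∩ {ω | (π ω : WithTop ℝ) ≤ t}) ∩ {ω | (η ω : WithTop ℝ) ≤ t}) := by
    ext ω
    by_cases hω : ω ∈ A <;>
      simp only [Set.piecewise, hω, if_true, if_false, Set.mem_union, Set.mem_inter_iff,
        Set.mem_setOf_eq, Set.mem_compl_iff, not_true, not_false_iff, false_and, true_and,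
        and_true, or_false, false_or, if_pos, if_neg, hω, not_false_eq_true, WithTop.coe_le_coe]
    exact ⟨fun h => ⟨(hle ω).trans h, h⟩, fun h => h.2⟩
  rw [h1]
  exact ((((hπ.measurableSet A).mp hA).2 t).union
    (((((hπ.measurableSet Aᶜ).mp hA.compl).2 t)).inter (hη t)))

/-- If `π ≤ η` are stopping times and `A` is `ℱ_π`-measurable, then the map equal to `η` on `A`
and `π` off `A` is a stopping time. -/
lemma aux_piecewise_snd (hπ : IsStoppingTime ℱ (fun ω => (π ω : WithTop ℝ))) (hη : IsStoppingTime ℱ (fun ω => (η ω : WithTop ℝ)))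
    (hle : ∀ ω, π ω ≤ η ω) {A : Set Ω} [DecidablePred (· ∈ A)]
    (hA : MeasurableSet[hπ.measurableSpace] A) :
    IsStoppingTime ℱ (fun ω => (A.piecewise η π ω : WithTop ℝ)) := by
  intro t
  have h1 : {ω | (A.piecewise η π ω : WithTop ℝ) ≤ t} =
      ((A ∩ {ω | (π ω : WithTop ℝ) ≤ t}) ∩ {ω | (η ω : WithTop ℝ) ≤ t}) ∪ (Aᶜ ∩ {ω | (π ω : WithTop ℝ) ≤ t}) := by
    ext ω
    by_cases hω : ω ∈ A <;>
      simp only [Set.piecewise, hω, if_true, if_false, Set.mem_union, Set.mem_inter_iff,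
        Set.mem_setOf_eq, Set.mem_compl_iff, not_true, not_false_iff, false_and, true_and,
        and_true, or_false, false_or, if_pos, if_neg, not_false_eq_true, WithTop.coe_le_coe]
    exact ⟨fun h => ⟨(hle ω).trans h, h⟩, fun h => h.2⟩
  rw [h1]
  exact (((((hπ.measurableSet A).mp hA).2 t)).inter (hη t)).union (((hπ.measurableSet Aᶜ).mp hA.compl).2 t)

variable {μ : Measure Ω} [IsProbabilityMeasure μ]

/-- Key forward step: if `τ` is optimal and, for every `ℱ_π`-measurable set `A`, the map
`A.piecewise σ τ` is a stopping time, then `𝔼[Y_σ | ℱ_π] ≤ 𝔼[Y_τ | ℱ_π]` a.e. -/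
lemma aux_forward (ℱ : Filtration ℝ m) (Y : ℝ → Ω → ℝ)
    (hint : ∀ σ : Ω → ℝ, IsStoppingTime ℱ (fun ω => (σ ω : WithTop ℝ)) → Integrable (fun ω => Y (σ ω) ω) μ)
    {τ σ π : Ω → ℝ} (hτ : IsStoppingTime ℱ (fun ω => (τ ω : WithTop ℝ))) (hσ : IsStoppingTime ℱ (fun ω => (σ ω : WithTop ℝ)))
    (hπ : IsStoppingTime ℱ (fun ω => (π ω : WithTop ℝ)))
    (hopt : ∀ ρ : Ω → ℝ, IsStoppingTime ℱ (fun ω => (ρ ω : WithTop ℝ)) → ∫ ω, Y (ρ ω) ω ∂μ ≤ ∫ ω, Y (τ ω) ω ∂μ)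
    (hst : ∀ (A : Set Ω) (_ : DecidablePred (· ∈ A)),
      MeasurableSet[hπ.measurableSpace] A → IsStoppingTime ℱ (fun ω => (A.piecewise σ τ ω : WithTop ℝ))) :
    μ[fun ω => Y (σ ω) ω|hπ.measurableSpace] ≤ᵐ[μ] μ[fun ω => Y (τ ω) ω|hπ.measurableSpace] := by
  classical
  have hm : hπ.measurableSpace ≤ m := hπ.measurableSpace_le
  set f := μ[fun ω => Y (σ ω) ω|hπ.measurableSpace] with hf
  set g := μ[fun ω => Y (τ ω) ω|hπ.measurableSpace] with hg
  have hfm : StronglyMeasurable[hπ.measurableSpace] f := stronglyMeasurable_condExp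
  have hgm : StronglyMeasurable[hπ.measurableSpace] g := stronglyMeasurable_condExp
  set A : Set Ω := {ω | g ω < f ω} with hA_def
  have hA : MeasurableSet[hπ.measurableSpace] A := measurableSet_lt hgm.measurable hfm.measurable
  have hAm : MeasurableSet[m] A := hm _ hA
  set ρ : Ω → ℝ := A.piecewise σ τ with hρ_def
  have hρ : IsStoppingTime ℱ (fun ω => (ρ ω : WithTop ℝ)) := hst A (fun _ => inferInstance) hA
  have hρ_int : Integrable (fun ω => Y (ρ ω) ω) μ := hint ρ hρ
  have hσ_int : Integrable (fun ω => Y (σ ω) ω) μ := hint σ hσ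
  have hτ_int : Integrable (fun ω => Y (τ ω) ω) μ := hint τ hτ
  -- ∫_A Y_σ ≤ ∫_A Y_τ
  have hsplit_ρ : ∫ ω in A, Y (ρ ω) ω ∂μ + ∫ ω in Aᶜ, Y (ρ ω) ω ∂μ = ∫ ω, Y (ρ ω) ω ∂μ :=
    integral_add_compl hAm hρ_int
  have hsplit_τ : ∫ ω in A, Y (τ ω) ω ∂μ + ∫ ω in Aᶜ, Y (τ ω) ω ∂μ = ∫ ω, Y (τ ω) ω ∂μ :=
    integral_add_compl hAm hτ_int
  have hρA : ∫ ω in A, Y (ρ ω) ω ∂μ = ∫ ω in A, Y (σ ω) ω ∂μ :=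
    setIntegral_congr_fun hAm (fun ω hω => by rw [hρ_def, Set.piecewise_eq_of_mem _ _ _ hω])
  have hρAc : ∫ ω in Aᶜ, Y (ρ ω) ω ∂μ = ∫ ω in Aᶜ, Y (τ ω) ω ∂μ :=
    setIntegral_congr_fun hAm.compl
      (fun ω hω => by rw [hρ_def, Set.piecewise_eq_of_notMem _ _ _ hω])
  have hineq : ∫ ω in A, Y (σ ω) ω ∂μ ≤ ∫ ω in A, Y (τ ω) ω ∂μ := by
    have := hopt ρ hρ
    rw [← hsplit_ρ, ← hsplit_τ, hρA, hρAc] at this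
    linarith
  -- transfer to conditional expectations
  have hfA : ∫ ω in A, f ω ∂μ = ∫ ω in A, Y (σ ω) ω ∂μ := setIntegral_condExp hm hσ_int hA
  have hgA : ∫ ω in A, g ω ∂μ = ∫ ω in A, Y (τ ω) ω ∂μ := setIntegral_condExp hm hτ_int hA
  have hfg : ∫ ω in A, (f - g) ω ∂μ ≤ 0 := by
    have h' : ∫ ω in A, (f - g) ω ∂μ = ∫ ω in A, f ω ∂μ - ∫ ω in A, g ω ∂μ := by
      simp only [Pi.sub_apply]
      exact integral_sub integrable_condExp.integrableOn integrable_condExp.integrableOn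
    rw [h', hfA, hgA]
    linarith
  -- conclude μ A = 0
  have hApos : ∀ ω ∈ A, 0 < (f - g) ω := fun ω hω => sub_pos.mpr hω
  have hA0 : μ A = 0 := by
    by_contra h0
    have hpos : 0 < μ (Function.support (f - g) ∩ A) := by
      have hsub : A ⊆ Function.support (f - g) := fun ω hω => ne_of_gt (hApos ω hω)
      rw [Set.inter_eq_self_of_subset_right hsub]
      exact lt_of_le_of_ne zero_le (Ne.symm h0)
    have hnonneg : 0 ≤ᵐ[μ.restrict A] (f - g) :=
      (ae_restrict_iff' hAm).mpr (ae_of_all _ fun ω hω => (hApos ω hω).le)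
    have hint_fg : IntegrableOn (f - g) A μ :=
      (integrable_condExp.sub integrable_condExp).integrableOn
    have := (setIntegral_pos_iff_support_of_nonneg_ae hnonneg hint_fg).mpr hpos
    linarith
  -- conclude
  refine (ae_iff.mpr ?_)
  have hset : {ω | ¬ f ω ≤ g ω} = A := by
    ext ω; simp [hA_def, not_le]
  rw [hset]
  exact hA0

end Aux

/-- A stopping time `τ` maximizes `𝔼[Y_τ]` over all stopping times iff
(i) for every stopping time `σ ≤ τ`, `𝔼[Y_τ ∣ ℱ_σ] ≥ 𝔼[Y_σ ∣ ℱ_σ]` a.s., and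
(ii) for every stopping time `σ ≥ τ`, `𝔼[Y_τ ∣ ℱ_τ] ≥ 𝔼[Y_σ ∣ ℱ_τ]` a.s. -/
theorem stmt_0 {Ω : Type*} {m : MeasurableSpace Ω} {μ : Measure Ω} [IsProbabilityMeasure μ]
    (ℱ : Filtration ℝ m) (Y : ℝ → Ω → ℝ)
    (hadp : Adapted ℱ Y)
    (hint : ∀ σ : Ω → ℝ, IsStoppingTime ℱ (fun ω => (σ ω : WithTop ℝ)) → Integrable (fun ω => Y (σ ω) ω) μ)
    (τ : Ω → ℝ) (hτ : IsStoppingTime ℱ (fun ω => (τ ω : WithTop ℝ))) :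
    (∀ σ : Ω → ℝ, IsStoppingTime ℱ (fun ω => (σ ω : WithTop ℝ)) →
        ∫ ω, Y (σ ω) ω ∂μ ≤ ∫ ω, Y (τ ω) ω ∂μ) ↔
      ((∀ (σ : Ω → ℝ) (hσ : IsStoppingTime ℱ (fun ω => (σ ω : WithTop ℝ))), (∀ ω, σ ω ≤ τ ω) →
          μ[fun ω => Y (σ ω) ω|hσ.measurableSpace]
            ≤ᵐ[μ] μ[fun ω => Y (τ ω) ω|hσ.measurableSpace]) ∧
        (∀ (σ : Ω → ℝ), IsStoppingTime ℱ (fun ω => (σ ω : WithTop ℝ)) → (∀ ω, τ ω ≤ σ ω) →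
          μ[fun ω => Y (σ ω) ω|hτ.measurableSpace]
            ≤ᵐ[μ] μ[fun ω => Y (τ ω) ω|hτ.measurableSpace])) := by
  classical
  constructor
  · intro hopt
    constructor
    · -- (i) σ ≤ τ, condition on ℱ_σ
      intro σ hσ hle
      exact aux_forward ℱ Y hint hτ hσ hσ hopt
        (fun A _ hA => aux_piecewise_fst hσ hτ hle hA)
    · -- (ii) τ ≤ σ, condition on ℱ_τ
      intro σ hσ hle
      exact aux_forward ℱ Y hint hτ hσ hτ hopt
        (fun A _ hA => aux_piecewise_snd hτ hσ hle hA)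
  · rintro ⟨h1, h2⟩ σ hσ
    set B : Set Ω := {ω | σ ω ≤ τ ω} with hB_def
    have hBσ : MeasurableSet[hσ.measurableSpace] B := by
      simpa only [WithTop.coe_le_coe] using IsStoppingTime.measurableSet_le_stopping_time hσ hτ
    have hBτ : MeasurableSet[hτ.measurableSpace] B := by
      simpa only [WithTop.coe_le_coe] using IsStoppingTime.measurableSet_stopping_time_le hσ hτ
    have hBm : MeasurableSet B := hσ.measurableSpace_le _ hBσ
    have hσ_int : Integrable (fun ω => Y (σ ω) ω) μ := hint σ hσ
    have hτ_int : Integrable (fun ω => Y (τ ω) ω) μ := hint τ hτ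
    -- min and max stopping times
    have hρ1 : IsStoppingTime ℱ fun ω => ((min (σ ω) (τ ω) : ℝ) : WithTop ℝ) := by
      simpa only [WithTop.coe_min] using hσ.min hτ
    have hρ2 : IsStoppingTime ℱ fun ω => ((max (σ ω) (τ ω) : ℝ) : WithTop ℝ) := by
      simpa only [WithTop.coe_max] using hσ.max hτ
    have hρ1_int : Integrable (fun ω => Y (min (σ ω) (τ ω)) ω) μ := hint _ hρ1
    have hρ2_int : Integrable (fun ω => Y (max (σ ω) (τ ω)) ω) μ := hint _ hρ2
    have hB1 : MeasurableSet[hρ1.measurableSpace] B := by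
      have key : ∀ (f g : Ω → WithTop ℝ) (hfg : f = g) (hf : IsStoppingTime ℱ f)
          (hg : IsStoppingTime ℱ g), hf.measurableSpace = hg.measurableSpace := by
        intro f g hfg hf hg; subst hfg; rfl
      rw [key _ _ (funext fun ω => WithTop.coe_min (σ ω) (τ ω)) hρ1 (hσ.min hτ)]
      exact (hσ.measurableSet_min_iff hτ B).mpr ⟨hBσ, hBτ⟩
    -- part on B via (i)
    have hcond1 := h1 _ hρ1 (fun ω => min_le_right _ _)
    have hm1 : hρ1.measurableSpace ≤ m := hρ1.measurableSpace_le
    have hB_le : ∫ ω in B, Y (σ ω) ω ∂μ ≤ ∫ ω in B, Y (τ ω) ω ∂μ := by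
      have e1 : ∫ ω in B, Y (min (σ ω) (τ ω)) ω ∂μ =
          ∫ ω in B, (μ[fun ω => Y (min (σ ω) (τ ω)) ω|hρ1.measurableSpace]) ω ∂μ :=
        (setIntegral_condExp hm1 hρ1_int hB1).symm
      have e2 : ∫ ω in B, (μ[fun ω => Y (τ ω) ω|hρ1.measurableSpace]) ω ∂μ =
          ∫ ω in B, Y (τ ω) ω ∂μ := setIntegral_condExp hm1 hτ_int hB1
      have e3 : ∫ ω in B, Y (min (σ ω) (τ ω)) ω ∂μ = ∫ ω in B, Y (σ ω) ω ∂μ :=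
        setIntegral_congr_fun hBm (fun ω hω => by rw [min_eq_left hω])
      have e4 : ∫ ω in B, (μ[fun ω => Y (min (σ ω) (τ ω)) ω|hρ1.measurableSpace]) ω ∂μ ≤
          ∫ ω in B, (μ[fun ω => Y (τ ω) ω|hρ1.measurableSpace]) ω ∂μ :=
        integral_mono_ae integrable_condExp.integrableOn integrable_condExp.integrableOn
          (ae_restrict_of_ae hcond1)
      calc ∫ ω in B, Y (σ ω) ω ∂μ = ∫ ω in B, Y (min (σ ω) (τ ω)) ω ∂μ := e3.symm
        _ ≤ ∫ ω in B, Y (τ ω) ω ∂μ := by rw [e1]; exact e4.trans_eq e2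
    -- part on Bᶜ via (ii)
    have hcond2 := h2 _ hρ2 (fun ω => le_max_right _ _)
    have hmτ : hτ.measurableSpace ≤ m := hτ.measurableSpace_le
    have hBc_le : ∫ ω in Bᶜ, Y (σ ω) ω ∂μ ≤ ∫ ω in Bᶜ, Y (τ ω) ω ∂μ := by
      have e1 : ∫ ω in Bᶜ, Y (max (σ ω) (τ ω)) ω ∂μ =
          ∫ ω in Bᶜ, (μ[fun ω => Y (max (σ ω) (τ ω)) ω|hτ.measurableSpace]) ω ∂μ :=
        (setIntegral_condExp hmτ hρ2_int hBτ.compl).symm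
      have e2 : ∫ ω in Bᶜ, (μ[fun ω => Y (τ ω) ω|hτ.measurableSpace]) ω ∂μ =
          ∫ ω in Bᶜ, Y (τ ω) ω ∂μ := setIntegral_condExp hmτ hτ_int hBτ.compl
      have e3 : ∫ ω in Bᶜ, Y (max (σ ω) (τ ω)) ω ∂μ = ∫ ω in Bᶜ, Y (σ ω) ω ∂μ :=
        setIntegral_congr_fun hBm.compl (fun ω hω => by
          have : τ ω ≤ σ ω := le_of_lt (not_le.mp hω)
          rw [max_eq_left this])
      have e4 : ∫ ω in Bᶜ, (μ[fun ω => Y (max (σ ω) (τ ω)) ω|hτ.measurableSpace]) ω ∂μ ≤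
          ∫ ω in Bᶜ, (μ[fun ω => Y (τ ω) ω|hτ.measurableSpace]) ω ∂μ :=
        integral_mono_ae integrable_condExp.integrableOn integrable_condExp.integrableOn
          (ae_restrict_of_ae hcond2)
      calc ∫ ω in Bᶜ, Y (σ ω) ω ∂μ = ∫ ω in Bᶜ, Y (max (σ ω) (τ ω)) ω ∂μ := e3.symm
        _ ≤ ∫ ω in Bᶜ, Y (τ ω) ω ∂μ := by rw [e1]; exact e4.trans_eq e2
    have hsplit_σ := integral_add_compl hBm hσ_int
    have hsplit_τ := integral_add_compl hBm hτ_int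
    calc ∫ ω, Y (σ ω) ω ∂μ = ∫ ω in B, Y (σ ω) ω ∂μ + ∫ ω in Bᶜ, Y (σ ω) ω ∂μ := hsplit_σ.symm
      _ ≤ ∫ ω in B, Y (τ ω) ω ∂μ + ∫ ω in Bᶜ, Y (τ ω) ω ∂μ := add_le_add hB_le hBc_le
      _ = ∫ ω, Y (τ ω) ω ∂μ := hsplit_τ
end

section
/- Let $\underline\Gamma^1, \dots, \underline\Gamma^N$ be nonincreasing right-continuous nonnegative paths, let $W \ge 0$, and let $T$ be any optional increasing path (allocation) with $\sum_i (T^i(t) - T^i(u)) \le t - u$. Then $\int_0^\infty r e^{-rt} \sum_{i=1}^N \underline\Gamma^i_{T^i(t)}\,dT^i(t) \le \int_0^\infty r e^{-rt} \bigvee_{i=1}^N \underline\Gamma^i_{T^i(t)}\,dt$, with equality when $T$ is an index rule (each $T^i$ increases only where $\underline\Gamma^i_{T^i(t)} = \bigvee_j \underline\Gamma^j_{T^j(t)}$) and $\sum_i dT^i(t) = dt$. -/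
open MeasureTheory Set

section Aux

variable {N : ℕ} (T : Fin N → StieltjesFunction ℝ)

/-- The "unused speed" Stieltjes function `t ↦ max t 0 - ∑ i, T i t`. -/
noncomputable def banditU (hT0 : ∀ (i : Fin N) (t : ℝ), t ≤ 0 → T i t = 0)
    (hspeed : ∀ u t : ℝ, 0 ≤ u → u ≤ t → ∑ i, ((T i) t - (T i) u) ≤ t - u) :
    StieltjesFunction ℝ where
  toFun := fun t => max t 0 - ∑ i, T i t
  mono' := by
    intro u t hut
    dsimp only
    have key : (∑ i, (T i) t) - (∑ i, (T i) u) ≤ max t 0 - max u 0 := by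
      rcases le_or_gt t 0 with ht | ht
      · rw [Finset.sum_eq_zero (fun i _ => hT0 i t ht),
          Finset.sum_eq_zero (fun i _ => hT0 i u (hut.trans ht))]
        simpa using max_le_max hut (le_refl (0:ℝ))
      · rcases le_or_gt 0 u with hu | hu
        · have h := hspeed u t hu hut
          rw [Finset.sum_sub_distrib] at h
          rw [max_eq_left hu, max_eq_left (hu.trans hut)]
          linarith
        · have h := hspeed 0 t le_rfl ht.le
          rw [Finset.sum_sub_distrib, Finset.sum_eq_zero (fun i _ => hT0 i 0 le_rfl)] at h
          rw [Finset.sum_eq_zero (fun i _ => hT0 i u hu.le)]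
          rw [max_eq_left ht.le, max_eq_right hu.le]
          linarith
    linarith
  right_continuous' := by
    intro x
    apply ContinuousWithinAt.sub
    · exact ((continuous_id.max continuous_const).continuousAt).continuousWithinAt
    · exact tendsto_finset_sum _ fun i _ => (T i).right_continuous' x

theorem banditU_apply (hT0 : ∀ (i : Fin N) (t : ℝ), t ≤ 0 → T i t = 0)
    (hspeed : ∀ u t : ℝ, 0 ≤ u → u ≤ t → ∑ i, ((T i) t - (T i) u) ≤ t - u) (t : ℝ) :
    banditU T hT0 hspeed t = max t 0 - ∑ i, T i t := rfl

theorem bandit_sum_measure_Ioc (a b : ℝ) (hab : a ≤ b) :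
    (∑ i, (T i).measure) (Ioc a b) = ENNReal.ofReal (∑ i, ((T i) b - (T i) a)) := by
  rw [Measure.finset_sum_apply]
  rw [ENNReal.ofReal_sum_of_nonneg (fun i _ => sub_nonneg.mpr ((T i).mono hab))]
  exact Finset.sum_congr rfl fun i _ => (T i).measure_Ioc a b

theorem bandit_measure_identity
    (hT0 : ∀ (i : Fin N) (t : ℝ), t ≤ 0 → T i t = 0)
    (hspeed : ∀ u t : ℝ, 0 ≤ u → u ≤ t → ∑ i, ((T i) t - (T i) u) ≤ t - u) :
    (∑ i, (T i).measure) + (banditU T hT0 hspeed).measure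
      = volume.restrict (Ioi (0:ℝ)) := by
  refine Measure.ext_of_Ioc' _ _ (fun a b hab => ?_) (fun a b hab => ?_)
  · rw [Measure.add_apply, bandit_sum_measure_Ioc T a b hab.le,
      (banditU T hT0 hspeed).measure_Ioc]
    exact ENNReal.add_ne_top.mpr ⟨ENNReal.ofReal_ne_top, ENNReal.ofReal_ne_top⟩
  · rw [Measure.add_apply, bandit_sum_measure_Ioc T a b hab.le,
      (banditU T hT0 hspeed).measure_Ioc,
      Measure.restrict_apply measurableSet_Ioc, Ioc_inter_Ioi, Real.volume_Ioc,
      ← ENNReal.ofReal_add (Finset.sum_nonneg fun i _ => sub_nonneg.mpr ((T i).mono hab.le))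
        (sub_nonneg.mpr ((banditU T hT0 hspeed).mono hab.le)),
      banditU_apply, banditU_apply, Finset.sum_sub_distrib]
    have harr : ∑ i, (T i) b - ∑ i, (T i) a
        + (max b 0 - ∑ i, (T i) b - (max a 0 - ∑ i, (T i) a)) = max b 0 - max a 0 := by ring
    rw [harr]
    rcases lt_or_ge 0 b with hb | hb
    · rw [max_eq_left hb.le]
    · have h1 : max b 0 - max a 0 ≤ 0 := by
        rw [max_eq_right hb]
        simp [le_max_iff]
      have h2 : b - max a 0 ≤ 0 := by
        rw [sub_nonpos]
        exact hb.trans (le_max_right a 0)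
      rw [ENNReal.ofReal_of_nonpos h1, ENNReal.ofReal_of_nonpos h2]

theorem bandit_measure_eq
    (hT0 : ∀ (i : Fin N) (t : ℝ), t ≤ 0 → T i t = 0)
    (hspeed' : ∀ u t : ℝ, 0 ≤ u → u ≤ t → ∑ i, ((T i) t - (T i) u) = t - u) :
    (∑ i, (T i).measure) = volume.restrict (Ioi (0:ℝ)) := by
  refine Measure.ext_of_Ioc' _ _ (fun a b hab => ?_) (fun a b hab => ?_)
  · rw [bandit_sum_measure_Ioc T a b hab.le]; exact ENNReal.ofReal_ne_top
  · rw [bandit_sum_measure_Ioc T a b hab.le,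
      Measure.restrict_apply measurableSet_Ioc, Ioc_inter_Ioi, Real.volume_Ioc]
    rcases lt_or_ge 0 b with hb | hb
    · rcases le_or_gt 0 a with ha | ha
      · rw [hspeed' a b ha hab.le, max_eq_left ha]
      · have h0b := hspeed' 0 b le_rfl hb.le
        have key : ∑ i, ((T i) b - (T i) a) = b := by
          rw [Finset.sum_sub_distrib, Finset.sum_eq_zero (fun i _ => hT0 i a ha.le)]
          rw [Finset.sum_sub_distrib, Finset.sum_eq_zero
            (fun i _ => hT0 i 0 le_rfl)] at h0b
          linarith
        rw [key, max_eq_right ha.le, sub_zero]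
    · rw [Finset.sum_eq_zero (fun i _ => by
        rw [hT0 i b hb, hT0 i a (hab.le.trans hb), sub_zero]),
        ENNReal.ofReal_zero,
        ENNReal.ofReal_of_nonpos (by rw [sub_nonpos]; exact hb.trans (le_max_right a 0))]

end Aux

/-- Deterministic core of the bandit verification argument: for nonincreasing,
right-continuous, nonnegative index lower envelopes `Γ̲^i` and any optional
increasing path `T` with total speed at most one,
`∑_i ∫_0^∞ r e^{-rt} Γ̲^i(T^i(t)) dT^i(t) ≤ ∫_0^∞ r e^{-rt} ⋁_i Γ̲^i(T^i(t)) dt`,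
with equality when `T` is an index rule run at full speed. -/
theorem stmt_14 (N : ℕ) (hN : 0 < N) (r : ℝ) (hr : 0 < r)
    (Γmin : Fin N → ℝ → ℝ)
    (hanti : ∀ i, AntitoneOn (Γmin i) (Set.Ici 0))
    (hnn : ∀ (i : Fin N) (x : ℝ), 0 ≤ x → 0 ≤ Γmin i x)
    (hrc : ∀ (i : Fin N) (t : ℝ), 0 ≤ t → ContinuousWithinAt (Γmin i) (Set.Ici t) t)
    (T : Fin N → StieltjesFunction ℝ)
    (hT0 : ∀ (i : Fin N) (t : ℝ), t ≤ 0 → T i t = 0)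
    (hspeed : ∀ u t : ℝ, 0 ≤ u → u ≤ t → ∑ i, ((T i) t - (T i) u) ≤ t - u) :
    (∑ i, ∫ t in Set.Ioi (0:ℝ), r * Real.exp (-r * t) * Γmin i ((T i) t) ∂((T i).measure))
      ≤ ∫ t in Set.Ioi (0:ℝ), r * Real.exp (-r * t) * (⨆ i, Γmin i ((T i) t)) ∧
    (((∀ i : Fin N,
        (T i).measure {t : ℝ | 0 < t ∧ Γmin i ((T i) t) < ⨆ j, Γmin j ((T j) t)} = 0) ∧
      (∀ u t : ℝ, 0 ≤ u → u ≤ t → ∑ i, ((T i) t - (T i) u) = t - u)) →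
      (∑ i, ∫ t in Set.Ioi (0:ℝ),
          r * Real.exp (-r * t) * Γmin i ((T i) t) ∂((T i).measure))
        = ∫ t in Set.Ioi (0:ℝ), r * Real.exp (-r * t) * (⨆ i, Γmin i ((T i) t))) := by
  have hNE : Nonempty (Fin N) := Fin.pos_iff_nonempty.mp hN
  -- basic facts
  have hTnn : ∀ (i : Fin N) (t : ℝ), 0 ≤ (T i) t := by
    intro i t
    rcases le_or_gt t 0 with ht | ht
    · rw [hT0 i t ht]
    · rw [← hT0 i 0 le_rfl]
      exact (T i).mono ht.le
  set g : Fin N → ℝ → ℝ := fun i t => Γmin i ((T i) t) with hgdef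
  set G : ℝ → ℝ := fun t => ⨆ i, Γmin i ((T i) t) with hGdef
  have hganti : ∀ i, Antitone (g i) := fun i s t hst =>
    hanti i (hTnn i s) (hTnn i t) ((T i).mono hst)
  have hgnn : ∀ i t, 0 ≤ g i t := fun i t => hnn i _ (hTnn i t)
  have hgle : ∀ i t, g i t ≤ G t := fun i t =>
    le_ciSup (f := fun j => Γmin j ((T j) t)) (Set.Finite.bddAbove (Set.finite_range _)) i
  have hGnn : ∀ t, 0 ≤ G t := fun t =>
    (hgnn (Classical.arbitrary (Fin N)) t).trans (hgle _ t)
  have hGanti : Antitone G := fun s t hst =>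
    ciSup_le fun i => (hganti i hst).trans (hgle i s)
  have hGmeas : Measurable G := hGanti.measurable
  set f : ℝ → ℝ := fun t => r * Real.exp (-r * t) with hfdef
  have hfnn : ∀ t, 0 ≤ f t := fun t => le_of_lt (mul_pos hr (Real.exp_pos _))
  have hfmeas : Measurable f :=
    (measurable_const.mul ((Real.measurable_exp).comp (measurable_const.mul measurable_id)))
  set F : ℝ → ℝ := fun t => f t * G t with hFdef
  have hFmeas : Measurable F := hfmeas.mul hGmeas
  have hFnn : ∀ t, 0 ≤ F t := fun t => mul_nonneg (hfnn t) (hGnn t)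
  -- integrability of F w.r.t. Lebesgue on (0, ∞)
  have hexp : IntegrableOn (fun t => r * G 0 * Real.exp (-r * t)) (Ioi (0:ℝ)) volume :=
    (exp_neg_integrableOn_Ioi 0 hr).const_mul (r * G 0)
  have hFint_vol : IntegrableOn F (Ioi (0:ℝ)) volume := by
    refine Integrable.mono' hexp hFmeas.aestronglyMeasurable ?_
    rw [ae_restrict_iff' measurableSet_Ioi]
    refine Filter.Eventually.of_forall fun t ht => ?_
    rw [Real.norm_eq_abs, abs_of_nonneg (hFnn t)]
    have : G t ≤ G 0 := hGanti (le_of_lt ht)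
    calc F t = r * Real.exp (-r * t) * G t := rfl
      _ ≤ r * Real.exp (-r * t) * G 0 := by
          exact mul_le_mul_of_nonneg_left this (hfnn t)
      _ = r * G 0 * Real.exp (-r * t) := by ring
  -- measure comparisons
  have hid := bandit_measure_identity T hT0 hspeed
  have hsum_le : (∑ i, (T i).measure) ≤ volume.restrict (Ioi (0:ℝ)) := by
    rw [← hid]
    refine Measure.le_iff.mpr fun s hs => ?_
    rw [Measure.add_apply]
    exact le_self_add
  have hle_i : ∀ i, (T i).measure ≤ volume.restrict (Ioi (0:ℝ)) := by
    intro i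
    refine le_trans (Measure.le_iff.mpr fun s hs => ?_) hsum_le
    rw [Measure.finset_sum_apply]
    exact Finset.single_le_sum (f := fun j => (T j).measure s)
      (fun j _ => zero_le) (Finset.mem_univ i)
  have hrestr : ∀ μ : Measure ℝ, μ ≤ volume.restrict (Ioi (0:ℝ)) →
      μ.restrict (Ioi (0:ℝ)) ≤ volume.restrict (Ioi (0:ℝ)) := by
    intro μ hμ
    have := Measure.restrict_mono (subset_refl (Ioi (0:ℝ))) hμ
    rwa [Measure.restrict_restrict measurableSet_Ioi, Set.inter_self] at this
  have hFint_i : ∀ i, Integrable F (((T i).measure).restrict (Ioi (0:ℝ))) := fun i =>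
    Integrable.mono_measure hFint_vol (hrestr _ (hle_i i))
  have hfg_int_i : ∀ i, Integrable (fun t => f t * g i t)
      (((T i).measure).restrict (Ioi (0:ℝ))) := by
    intro i
    refine Integrable.mono' (hFint_i i)
      ((hfmeas.mul ((hganti i).measurable)).aestronglyMeasurable) ?_
    refine Filter.Eventually.of_forall fun t => ?_
    rw [Real.norm_eq_abs, abs_of_nonneg (mul_nonneg (hfnn t) (hgnn i t))]
    exact mul_le_mul_of_nonneg_left (hgle i t) (hfnn t)
  -- restrict distributes over the finite sum
  have hrs : (∑ i, (T i).measure).restrict (Ioi (0:ℝ))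
      = ∑ i, ((T i).measure.restrict (Ioi (0:ℝ))) := by
    ext s hs
    simp [Measure.restrict_apply hs, Measure.finset_sum_apply,
      Measure.restrict_apply (hs.inter measurableSet_Ioi), Set.inter_assoc]
  have hsum_restrict_le : (∑ i, ((T i).measure.restrict (Ioi (0:ℝ))))
      ≤ volume.restrict (Ioi (0:ℝ)) := by
    rw [← hrs]; exact hrestr _ hsum_le
  -- key rewriting: sum of integrals of F
  have hsumF : (∑ i, ∫ t in Set.Ioi (0:ℝ), F t ∂((T i).measure))
      = ∫ t, F t ∂(∑ i, ((T i).measure.restrict (Ioi (0:ℝ)))) :=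
    (integral_finset_sum_measure fun i _ => hFint_i i).symm
  constructor
  · -- the inequality
    calc (∑ i, ∫ t in Set.Ioi (0:ℝ), f t * g i t ∂((T i).measure))
        ≤ ∑ i, ∫ t in Set.Ioi (0:ℝ), F t ∂((T i).measure) := by
          refine Finset.sum_le_sum fun i _ => ?_
          exact integral_mono (hfg_int_i i) (hFint_i i)
            (fun t => mul_le_mul_of_nonneg_left (hgle i t) (hfnn t))
      _ = ∫ t, F t ∂(∑ i, ((T i).measure.restrict (Ioi (0:ℝ)))) := hsumF
      _ ≤ ∫ t in Set.Ioi (0:ℝ), F t := by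
          exact integral_mono_measure hsum_restrict_le
            (Filter.Eventually.of_forall fun t => hFnn t) hFint_vol
  · -- equality under the index-rule and full-speed assumptions
    rintro ⟨hnull, hsp'⟩
    have heqmeas := bandit_measure_eq T hT0 hsp'
    have heqres : (∑ i, ((T i).measure.restrict (Ioi (0:ℝ))))
        = volume.restrict (Ioi (0:ℝ)) := by
      rw [← hrs, heqmeas, Measure.restrict_restrict measurableSet_Ioi, Set.inter_self]
    have heach : ∀ i, (∫ t in Set.Ioi (0:ℝ), f t * g i t ∂((T i).measure))
        = ∫ t in Set.Ioi (0:ℝ), F t ∂((T i).measure) := by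
      intro i
      refine integral_congr_ae ?_
      have hae : ∀ᵐ t ∂(((T i).measure).restrict (Ioi (0:ℝ))), g i t = G t := by
        rw [ae_restrict_iff' measurableSet_Ioi, ae_iff]
        refine measure_mono_null (fun t ht => ?_) (hnull i)
        simp only [Set.mem_setOf_eq, not_forall] at ht ⊢
        obtain ⟨ht0, hne⟩ := ht
        exact ⟨ht0, lt_of_le_of_ne (hgle i t) hne⟩
      exact hae.mono fun t ht => by rw [hFdef]; dsimp only; rw [ht]
    calc (∑ i, ∫ t in Set.Ioi (0:ℝ), f t * g i t ∂((T i).measure))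
        = ∑ i, ∫ t in Set.Ioi (0:ℝ), F t ∂((T i).measure) :=
          Finset.sum_congr rfl fun i _ => heach i
      _ = ∫ t, F t ∂(∑ i, ((T i).measure.restrict (Ioi (0:ℝ)))) := hsumF
      _ = ∫ t in Set.Ioi (0:ℝ), F t := by rw [heqres]
end
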